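/- Let R be a commutative ring and S a multiplicative subset of R. If the localisation R[S⁻¹] admits a 𝒫₁(R)-cover, then the projective dimension of R[S⁻¹] as an R-module is at most 1. -/

import Mathlib

universe u

open MulOpposite Function

/-- An `A`-module `M` has projective dimension at most 1, i.e. there is a short exact
sequence `0 → ker g → P → M → 0` with `P` and `ker g` projective. -/
def ProjDimLE1 (A : Type u) [Ring A] (M : Type u) [AddCommGroup M] [Module A M] : Prop :=
  ∃ (P : ModuleCat.{u} A) (g : P →ₗ[A] M), Module.Projective A P ∧
    Function.Surjective g ∧ Module.Projective A (LinearMap.ker g)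

/-- `Ext¹_A(X, Y) = 0`: every short exact sequence `0 → Y → E → X → 0` splits. -/
def Ext1Vanishes (A : Type u) [Ring A] (X Y : Type u) [AddCommGroup X] [Module A X]
    [AddCommGroup Y] [Module A Y] : Prop :=
  ∀ (E : Type u) [AddCommGroup E] [Module A E], ∀ (i : Y →ₗ[A] E) (p : E →ₗ[A] X),
    Function.Injective i → Function.Surjective p → LinearMap.range i = LinearMap.ker p →
    ∃ s : X →ₗ[A] E, p.comp s = LinearMap.id

/-- `φ : P → M` is a `C`-cover of `M`: `P ∈ C`, every map from a module of `C` to `M`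
factors through `φ`, and every endomorphism `e` of `P` with `φ ∘ e = φ` is an automorphism. -/
def IsCover (A : Type u) [Ring A] (C : Set (ModuleCat.{u} A)) (P : ModuleCat.{u} A)
    (M : Type u) [AddCommGroup M] [Module A M] (φ : P →ₗ[A] M) : Prop :=
  P ∈ C ∧
  (∀ P' ∈ C, ∀ ψ : (P' : Type u) →ₗ[A] M, ∃ h : (P' : Type u) →ₗ[A] (P : Type u),
    φ.comp h = ψ) ∧
  (∀ e : (P : Type u) →ₗ[A] (P : Type u), φ.comp e = φ → Function.Bijective e)

/-- The class `C` is covering: every `A`-module admits a `C`-cover. -/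
def IsCoveringClass (A : Type u) [Ring A] (C : Set (ModuleCat.{u} A)) : Prop :=
  ∀ M : ModuleCat.{u} A, ∃ (P : ModuleCat.{u} A) (φ : P →ₗ[A] (M : Type u)),
    IsCover A C P (M : Type u) φ

/-- The class `𝒫₁(A)` of modules of projective dimension at most one. -/
def P1Class (A : Type u) [Ring A] : Set (ModuleCat.{u} A) := {M | ProjDimLE1 A M}

/-- **Lemma 5.2(i).** Let `R` be a commutative ring and `S` a multiplicative subset of
`R`. If the localisation `R[S⁻¹]` has a `𝒫₁(R)`-cover, then `p.dim_R R[S⁻¹] ≤ 1`. -/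
theorem pd_le_one_of_localization_has_P1_cover (R : Type u) [CommRing R] (S : Submonoid R)
    (h : ∃ (P : ModuleCat.{u} R) (φ : (P : Type u) →ₗ[R] Localization S),
      IsCover R (P1Class R) P (Localization S) φ) :
    ProjDimLE1 R (Localization S) := by
  classical
  obtain ⟨P, φ, hmem, hpre, hmin⟩ := h
  set M := Localization S with hM
  set ℓ : R →ₗ[R] M := Algebra.linearMap R M with hℓ
  -- units acting on M
  have hMu : ∀ s : S, IsUnit (algebraMap R (Module.End R M) s) := by
    intro s
    have h := IsLocalization.map_units M s
    have := h.map (Algebra.lmul R M)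
    rwa [AlgHom.commutes] at this
  -- R is in the class
  have hR : ModuleCat.of R R ∈ P1Class R := by
    refine ⟨ModuleCat.of R R, LinearMap.id, (inferInstance : Module.Projective R R), surjective_id, ?_⟩
    rw [LinearMap.ker_id]; infer_instance
  obtain ⟨h₀, hh₀⟩ := hpre (ModuleCat.of R R) hR ℓ
  -- key step: each s ∈ S acts invertibly on P
  have hPu : ∀ s : S, IsUnit (algebraMap R (Module.End R (P : Type u)) s) := by
    intro s
    set u := (hMu s).unit with hu
    obtain ⟨f, hf⟩ := hpre P hmem ((↑u⁻¹ : Module.End R M) ∘ₗ φ)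
    set e : (P : Type u) →ₗ[R] (P : Type u) := (s : R) • f with he
    have hφe : φ.comp e = φ := by
      ext x
      have h1 : φ (e x) = (s : R) • φ (f x) := by
        simp [he, map_smul]
      have h2 : φ (f x) = (↑u⁻¹ : Module.End R M) (φ x) := by
        rw [← LinearMap.comp_apply, hf]; rfl
      have h3 : (s : R) • ((↑u⁻¹ : Module.End R M) (φ x)) = φ x := by
        have h4 : (s : R) • ((↑u⁻¹ : Module.End R M) (φ x))
            = ((algebraMap R (Module.End R M) s) * (↑u⁻¹ : Module.End R M)) (φ x) := by
          simp [Module.algebraMap_end_apply, Module.End.mul_apply]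
        have h5 : ((algebraMap R (Module.End R M)) (s : R)) = (u : Module.End R M) :=
          ((hMu s).unit_spec).symm
        rw [h4, h5, u.mul_inv]
        rfl
      simp only [LinearMap.comp_apply]
      rw [h1, h2, h3]
    have hbij : Function.Bijective e := hmin e hφe
    set E := LinearEquiv.ofBijective e hbij with hE
    set d : (P : Type u) →ₗ[R] (P : Type u) := f ∘ₗ (E.symm : (P : Type u) →ₗ[R] (P : Type u)) with hd
    have hsd : ∀ x : (P : Type u), (s : R) • d x = x := by
      intro x
      have : (s : R) • f (E.symm x) = e (E.symm x) := by simp [he]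
      have h2 : e (E.symm x) = x := E.apply_symm_apply x
      simp only [hd, LinearMap.comp_apply, LinearEquiv.coe_coe]
      rw [this]
      exact h2
    -- injectivity of smul s
    have hinj : Function.Injective (fun x : (P : Type u) => (s : R) • x) := by
      set e2 : (P : Type u) →ₗ[R] (P : Type u) := d ∘ₗ (algebraMap R (Module.End R (P : Type u)) s) with he2
      have hφe2 : φ.comp e2 = φ := by
        ext x
        have key : (s : R) • φ (d ((s:R) • x)) = (s : R) • φ x := by
          rw [← map_smul, hsd, map_smul]
        have hsinjM : Function.Injective (fun y : M => (s : R) • y) := by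
          have := (Module.End.isUnit_iff _).mp (hMu s)
          exact this.injective
        have := hsinjM key
        simpa [he2, Module.algebraMap_end_apply] using this
      have hbij2 : Function.Bijective e2 := hmin e2 hφe2
      intro x y hxy
      have : e2 x = e2 y := by simp only [he2, LinearMap.comp_apply, Module.algebraMap_end_apply]; exact congrArg d hxy
      exact hbij2.injective this
    rw [Module.End.isUnit_iff]
    constructor
    · intro x y hxy
      exact hinj hxy
    · intro x
      exact ⟨d x, by simpa [Module.algebraMap_end_apply] using hsd x⟩
  -- build section σ : M → P
  set σ : M →ₗ[R] (P : Type u) := IsLocalizedModule.lift S ℓ h₀ hPu with hσ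
  have hσℓ : σ.comp ℓ = h₀ := IsLocalizedModule.lift_comp S ℓ h₀ hPu
  have hsec : φ.comp σ = LinearMap.id := by
    apply IsLocalizedModule.ext S ℓ hMu
    rw [LinearMap.comp_assoc, hσℓ, hh₀, LinearMap.id_comp]
  -- φ is injective
  have hφinj : Function.Injective φ := by
    intro x y hxy
    have := hmin (σ ∘ₗ φ) (by rw [← LinearMap.comp_assoc, hsec, LinearMap.id_comp])
    exact this.injective (by simp only [LinearMap.comp_apply, hxy])
  have hφsurj : Function.Surjective φ := by
    intro m
    exact ⟨σ m, by simpa using LinearMap.congr_fun hsec m⟩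
  -- conclude
  obtain ⟨Q, g, hQ, hgsurj, hker⟩ := hmem
  refine ⟨Q, φ.comp g, hQ, ?_, ?_⟩
  · exact hφsurj.comp hgsurj
  · rw [LinearMap.ker_comp, LinearMap.ker_eq_bot.mpr hφinj, Submodule.comap_bot]
    exact hker
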